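/- Let x be a local maximizer of f_max = max(f_1, ..., f_n), and suppose there exist indices j₁, j₂ (possibly equal) and δ > 0 such that f_max(x − ε) = f_{j₁}(x − ε) and f_max(x + ε) = f_{j₂}(x + ε) for all 0 < ε < δ, where f_{j₁} and f_{j₂} are C³ near x. Then f_max is twice continuously differentiable near x, with second derivative Lipschitz continuous near x. -/

import Mathlib

open Set Filter Asymptotics Topology

/-- gluing a function vanishing to first order at `x` with `0` is differentiable at `x`. -/
lemma aux_hasDerivAt_ite {w : ℝ → ℝ} {x : ℝ} (hw0 : w x = 0) (hw : HasDerivAt w 0 x) :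
    HasDerivAt (fun t => if t ≤ x then w t else 0) 0 x := by
  rw [hasDerivAt_iff_isLittleO] at hw ⊢
  have h1 : (fun t => (if t ≤ x then w t else 0) - (if x ≤ x then w x else 0) - (t - x) • (0:ℝ))
      = fun t => if t ≤ x then w t else 0 := by
    funext t; simp [hw0]
  have h2 : (fun t => w t - w x - (t - x) • (0:ℝ)) = fun t => w t := by
    funext t; simp [hw0]
  rw [h1]
  rw [h2] at hw
  have hO : (fun t => if t ≤ x then w t else 0) =O[𝓝 x] fun t => w t := by
    apply isBigO_of_le
    intro t
    split
    · exact le_refl _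
    · simp [abs_nonneg]
  exact hO.trans_isLittleO hw

lemma aux_lipschitz_ite {w : ℝ → ℝ} {x : ℝ} {s : Set ℝ} {K : NNReal} (hxs : x ∈ s)
    (hw0 : w x = 0) (hK : LipschitzOnWith K w s) :
    LipschitzOnWith K (fun t => if t ≤ x then w t else 0) s := by
  rw [lipschitzOnWith_iff_dist_le_mul] at hK ⊢
  intro p hp q hq
  rcases le_or_gt p x with h1 | h1 <;> rcases le_or_gt q x with h2 | h2
  · simpa [h1, h2] using hK p hp q hq
  · simp only [if_pos h1, if_neg (not_le.2 h2)]
    calc dist (w p) 0 = dist (w p) (w x) := by rw [hw0]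
      _ ≤ K * dist p x := hK p hp x hxs
      _ ≤ K * dist p q := by
          gcongr
          rw [Real.dist_eq, Real.dist_eq, abs_of_nonpos (by linarith), abs_of_nonpos (by linarith)]
          linarith
  · simp only [if_neg (not_le.2 h1), if_pos h2]
    calc dist 0 (w q) = dist (w x) (w q) := by rw [hw0]
      _ ≤ K * dist x q := hK x hxs q hq
      _ ≤ K * dist p q := by
          gcongr
          rw [Real.dist_eq, Real.dist_eq, abs_of_nonneg (by linarith), abs_of_nonneg (by linarith)]
          linarith
  · simp only [if_neg (not_le.2 h1), if_neg (not_le.2 h2), dist_self]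
    positivity

lemma aux_lipschitz_add {F G : ℝ → ℝ} {s : Set ℝ} {K₁ K₂ : NNReal}
    (hF : LipschitzOnWith K₁ F s) (hG : LipschitzOnWith K₂ G s) :
    LipschitzOnWith (K₁ + K₂) (fun t => F t + G t) s := by
  rw [lipschitzOnWith_iff_dist_le_mul] at hF hG ⊢
  intro p hp q hq
  calc dist (F p + G p) (F q + G q) ≤ dist (F p) (F q) + dist (G p) (G q) := dist_add_add_le _ _ _ _
    _ ≤ K₁ * dist p q + K₂ * dist p q := add_le_add (hF p hp q hq) (hG p hp q hq)
    _ = (K₁ + K₂ : NNReal) * dist p q := by push_cast; ring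

lemma aux_lipschitz_congr {F G : ℝ → ℝ} {s : Set ℝ} {K : NNReal} (h : Set.EqOn F G s)
    (hG : LipschitzOnWith K G s) : LipschitzOnWith K F s := by
  intro p hp q hq
  rw [h hp, h hq]
  exact hG hp hq

/-- if near a local maximizer the max function agrees with one C³
function on the left and one on the right, then it is C² with Lipschitz second
derivative near the maximizer. -/
theorem stmt_5 {n : ℕ} (hn : 0 < n) (D : Set ℝ) (hD : IsOpen D)
    (f : Fin n → ℝ → ℝ) (hf : ∀ j, ContinuousOn (f j) D)
    (fmax : ℝ → ℝ)
    (hfmax : ∀ t, fmax t =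
      Finset.univ.sup' (Finset.univ_nonempty_iff.mpr ⟨⟨0, hn⟩⟩) (fun j => f j t))
    (x : ℝ) (hx : x ∈ D) (hmax : IsLocalMax fmax x)
    (j₁ j₂ : Fin n) (δ : ℝ) (hδ : 0 < δ)
    (hleft : ∀ ε : ℝ, 0 < ε → ε < δ → fmax (x - ε) = f j₁ (x - ε))
    (hright : ∀ ε : ℝ, 0 < ε → ε < δ → fmax (x + ε) = f j₂ (x + ε))
    (hC3₁ : ContDiffAt ℝ 3 (f j₁) x) (hC3₂ : ContDiffAt ℝ 3 (f j₂) x) :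
    ∃ r > (0 : ℝ),
      ContDiffOn ℝ 2 fmax (Set.Ioo (x - r) (x + r)) ∧
      ∃ L : NNReal, LipschitzOnWith L (deriv (deriv fmax)) (Set.Ioo (x - r) (x + r)) := by
  -- C³ neighborhoods
  obtain ⟨u₁, hu₁n, hu₁⟩ := hC3₁.contDiffOn le_rfl (by simp)
  obtain ⟨u₂, hu₂n, hu₂⟩ := hC3₂.contDiffOn le_rfl (by simp)
  set V : Set ℝ := interior u₁ ∩ interior u₂ ∩ D with hVdef
  have hVo : IsOpen V := ((isOpen_interior.inter isOpen_interior).inter hD)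
  have hxV : x ∈ V :=
    ⟨⟨mem_interior_iff_mem_nhds.2 hu₁n, mem_interior_iff_mem_nhds.2 hu₂n⟩, hx⟩
  have hV1 : ContDiffOn ℝ 3 (f j₁) V := hu₁.mono fun t ht => interior_subset ht.1.1
  have hV2 : ContDiffOn ℝ 3 (f j₂) V := hu₂.mono fun t ht => interior_subset ht.1.2
  set h : ℝ → ℝ := fun t => f j₁ t - f j₂ t with hhdef
  have hVh : ContDiffOn ℝ 3 h V := hV1.sub hV2
  -- basic derivative facts on V
  have hder1 : ∀ t ∈ V, HasDerivAt (f j₁) (deriv (f j₁) t) t := fun t ht =>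
    ((hV1.differentiableOn (by norm_num)).differentiableAt (hVo.mem_nhds ht)).hasDerivAt
  have hder2 : ∀ t ∈ V, HasDerivAt (f j₂) (deriv (f j₂) t) t := fun t ht =>
    ((hV2.differentiableOn (by norm_num)).differentiableAt (hVo.mem_nhds ht)).hasDerivAt
  have hder : ∀ t ∈ V, HasDerivAt h (deriv h t) t := fun t ht =>
    ((hVh.differentiableOn (by norm_num)).differentiableAt (hVo.mem_nhds ht)).hasDerivAt
  have hdh2 : ContDiffOn ℝ 2 (deriv h) V := hVh.deriv_of_isOpen hVo (by norm_num)
  have hdf2 : ContDiffOn ℝ 2 (deriv (f j₂)) V := hV2.deriv_of_isOpen hVo (by norm_num)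
  have hderd : ∀ t ∈ V, HasDerivAt (deriv h) (deriv (deriv h) t) t := fun t ht =>
    ((hdh2.differentiableOn (by norm_num)).differentiableAt (hVo.mem_nhds ht)).hasDerivAt
  have hderd2 : ∀ t ∈ V, HasDerivAt (deriv (f j₂)) (deriv (deriv (f j₂)) t) t := fun t ht =>
    ((hdf2.differentiableOn (by norm_num)).differentiableAt (hVo.mem_nhds ht)).hasDerivAt
  have hddh1 : ContDiffOn ℝ 1 (deriv (deriv h)) V := hdh2.deriv_of_isOpen hVo (by norm_num)
  have hddf1 : ContDiffOn ℝ 1 (deriv (deriv (f j₂))) V := hdf2.deriv_of_isOpen hVo (by norm_num)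
  -- Lipschitz neighborhoods of the second derivatives
  obtain ⟨K₁, t₁, ht₁n, hlip₁⟩ :=
    (hddh1.contDiffAt (hVo.mem_nhds hxV)).exists_lipschitzOnWith
  obtain ⟨K₂, t₂, ht₂n, hlip₂⟩ :=
    (hddf1.contDiffAt (hVo.mem_nhds hxV)).exists_lipschitzOnWith
  -- choose the radius r
  have hW : V ∩ t₁ ∩ t₂ ∩ {y | fmax y ≤ fmax x} ∈ 𝓝 x :=
    inter_mem (inter_mem (inter_mem (hVo.mem_nhds hxV) ht₁n) ht₂n) hmax
  obtain ⟨ε, hε, hball⟩ := Metric.mem_nhds_iff.1 hW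
  set r : ℝ := min (ε / 2) (δ / 2) with hrdef
  have hr0 : 0 < r := lt_min (by linarith) (by linarith)
  have hrε : r ≤ ε / 2 := min_le_left _ _
  have hrδ : r ≤ δ / 2 := min_le_right _ _
  set U : Set ℝ := Ioo (x - r) (x + r) with hUdef
  have hUo : IsOpen U := isOpen_Ioo
  have hxU : x ∈ U := ⟨by linarith, by linarith⟩
  have hUW : U ⊆ V ∩ t₁ ∩ t₂ ∩ {y | fmax y ≤ fmax x} := by
    intro y hy
    apply hball
    rw [Metric.mem_ball, Real.dist_eq]
    rcases hy with ⟨hy1, hy2⟩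
    rw [abs_lt]
    constructor <;> linarith
  have hUV : U ⊆ V := fun y hy => (hUW hy).1.1.1
  have hUt₁ : U ⊆ t₁ := fun y hy => (hUW hy).1.1.2
  have hUt₂ : U ⊆ t₂ := fun y hy => (hUW hy).1.2
  have hUmax : ∀ y ∈ U, fmax y ≤ fmax x := fun y hy => (hUW hy).2
  -- identification of fmax on left and right
  have hleft' : ∀ t ∈ U, t < x → fmax t = f j₁ t := by
    intro t ht hlt
    have h0 := hleft (x - t) (by linarith) (by rcases ht with ⟨ht1, _⟩; linarith)
    simpa [show x - (x - t) = t by ring] using h0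
  have hright' : ∀ t ∈ U, x < t → fmax t = f j₂ t := by
    intro t ht hlt
    have h0 := hright (t - x) (by linarith) (by rcases ht with ⟨_, ht2⟩; linarith)
    simpa [show x + (t - x) = t by ring] using h0
  have hcont : ∀ j, ContinuousAt (f j) x := fun j => (hf j).continuousAt (hD.mem_nhds hx)
  have hsup : ∀ j t, f j t ≤ fmax t := by
    intro j t
    rw [hfmax t]
    exact Finset.le_sup' (fun j => f j t) (Finset.mem_univ j)
  -- value matching at x
  have hfm2 : fmax x = f j₂ x := by
    refine le_antisymm ?_ (hsup j₂ x)
    obtain ⟨k, -, hk⟩ := Finset.exists_mem_eq_sup' (Finset.univ_nonempty_iff.mpr ⟨⟨0, hn⟩⟩)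
      (fun j : Fin n => f j x)
    rw [hfmax x, hk]
    have hT1 : Tendsto (f k) (𝓝[>] x) (𝓝 (f k x)) := (hcont k).continuousWithinAt.tendsto
    have hT2 : Tendsto (f j₂) (𝓝[>] x) (𝓝 (f j₂ x)) := (hcont j₂).continuousWithinAt.tendsto
    refine le_of_tendsto_of_tendsto hT1 hT2 ?_
    filter_upwards [Ioo_mem_nhdsGT_of_mem (⟨le_refl x, by linarith⟩ : x ∈ Ico x (x + r))]
      with t ht
    calc f k t ≤ fmax t := hsup k t
      _ = f j₂ t := hright' t ⟨by linarith [ht.1], ht.2⟩ ht.1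
  have hfm1 : fmax x = f j₁ x := by
    refine le_antisymm ?_ (hsup j₁ x)
    obtain ⟨k, -, hk⟩ := Finset.exists_mem_eq_sup' (Finset.univ_nonempty_iff.mpr ⟨⟨0, hn⟩⟩)
      (fun j : Fin n => f j x)
    rw [hfmax x, hk]
    have hT1 : Tendsto (f k) (𝓝[<] x) (𝓝 (f k x)) := (hcont k).continuousWithinAt.tendsto
    have hT2 : Tendsto (f j₁) (𝓝[<] x) (𝓝 (f j₁ x)) := (hcont j₁).continuousWithinAt.tendsto
    refine le_of_tendsto_of_tendsto hT1 hT2 ?_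
    filter_upwards [Ioo_mem_nhdsLT_of_mem (⟨by linarith, le_refl x⟩ : x ∈ Ioc (x - r) x)]
      with t ht
    calc f k t ≤ fmax t := hsup k t
      _ = f j₁ t := hleft' t ⟨ht.1, by linarith [ht.2]⟩ ht.2
  have h0 : h x = 0 := by
    simp only [hhdef]
    rw [← hfm1, ← hfm2, sub_self]
  -- sign facts
  have hpos : ∀ t ∈ U, t < x → 0 ≤ h t := by
    intro t ht hlt
    have : f j₂ t ≤ f j₁ t := by
      calc f j₂ t ≤ fmax t := hsup j₂ t
        _ = f j₁ t := hleft' t ht hlt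
    simp only [hhdef]; linarith
  have hneg : ∀ t ∈ U, x < t → h t ≤ 0 := by
    intro t ht hlt
    have : f j₁ t ≤ f j₂ t := by
      calc f j₁ t ≤ fmax t := hsup j₁ t
        _ = f j₂ t := hright' t ht hlt
    simp only [hhdef]; linarith
  have hfl : ∀ t ∈ U, t < x → f j₁ t ≤ f j₁ x := by
    intro t ht hlt
    calc f j₁ t = fmax t := (hleft' t ht hlt).symm
      _ ≤ fmax x := hUmax t ht
      _ = f j₁ x := hfm1
  have hfr : ∀ t ∈ U, x < t → f j₂ t ≤ f j₂ x := by
    intro t ht hlt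
    calc f j₂ t = fmax t := (hright' t ht hlt).symm
      _ ≤ fmax x := hUmax t ht
      _ = f j₂ x := hfm2
  -- first derivative of h vanishes at x
  have dh0 : deriv h x = 0 := by
    have ha : 0 ≤ deriv (f j₁) x := by
      have hT : Tendsto (slope (f j₁) x) (𝓝[<] x) (𝓝 (deriv (f j₁) x)) :=
        (hasDerivAt_iff_tendsto_slope.1 (hder1 x hxV)).mono_left
          (nhdsWithin_mono x fun t ht => ne_of_lt ht)
      refine ge_of_tendsto hT ?_
      filter_upwards [Ioo_mem_nhdsLT_of_mem (⟨by linarith, le_refl x⟩ : x ∈ Ioc (x - r) x)]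
        with t ht
      have htU : t ∈ U := ⟨ht.1, by linarith [ht.2]⟩
      rw [slope_def_field]
      exact div_nonneg_of_nonpos (by linarith [hfl t htU ht.2]) (by linarith [ht.2])
    have hb : deriv (f j₂) x ≤ 0 := by
      have hT : Tendsto (slope (f j₂) x) (𝓝[>] x) (𝓝 (deriv (f j₂) x)) :=
        (hasDerivAt_iff_tendsto_slope.1 (hder2 x hxV)).mono_left
          (nhdsWithin_mono x fun t ht => ne_of_gt ht)
      refine le_of_tendsto hT ?_
      filter_upwards [Ioo_mem_nhdsGT_of_mem (⟨le_refl x, by linarith⟩ : x ∈ Ico x (x + r))]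
        with t ht
      have htU : t ∈ U := ⟨by linarith [ht.1], ht.2⟩
      rw [slope_def_field]
      apply div_nonpos_of_nonpos_of_nonneg
      · linarith [hfr t htU ht.1]
      · linarith [ht.1]
    have hc : deriv h x ≤ 0 := by
      have hT : Tendsto (slope h x) (𝓝[≠] x) (𝓝 (deriv h x)) :=
        hasDerivAt_iff_tendsto_slope.1 (hder x hxV)
      refine le_of_tendsto hT ?_
      filter_upwards [self_mem_nhdsWithin,
        mem_nhdsWithin_of_mem_nhds (hUo.mem_nhds hxU)] with t hne htU
      rw [slope_def_field, h0, sub_zero]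
      rcases lt_or_gt_of_ne (hne : t ≠ x) with hlt | hgt
      · apply div_nonpos_of_nonneg_of_nonpos
        · exact hpos t htU hlt
        · linarith
      · apply div_nonpos_of_nonpos_of_nonneg
        · exact hneg t htU hgt
        · linarith
    have hsub : deriv h x = deriv (f j₁) x - deriv (f j₂) x := by
      simp only [hhdef]
      rw [deriv_fun_sub (hder1 x hxV).differentiableAt (hder2 x hxV).differentiableAt]
    linarith [hsub ▸ hc]
  -- second derivative of h vanishes at x
  have ddh0 : deriv (deriv h) x = 0 := by
    have claimL : ∀ ε > (0:ℝ), ∃ c, x - ε < c ∧ c < x ∧ deriv h c ≤ 0 := by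
      intro ε hε
      set a' : ℝ := max (x - r / 2) (x - ε) with ha'def
      have ha'x : a' < x := max_lt (by linarith) (by linarith)
      have ha'U : a' ∈ U := ⟨lt_of_lt_of_le (by linarith) (le_max_left _ _), by linarith⟩
      have hIU : Icc a' x ⊆ U := by
        intro y hy
        constructor
        · calc x - r < a' := lt_of_lt_of_le (by linarith) (le_max_left _ _)
            _ ≤ y := hy.1
        · linarith [hy.2]
      obtain ⟨c, hc, hceq⟩ := exists_hasDerivAt_eq_slope h (deriv h) ha'x
        ((hVh.continuousOn).mono fun y hy => hUV (hIU hy))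
        (fun y hy => hder y (hUV (hIU ⟨le_of_lt hy.1, le_of_lt hy.2⟩)))
      refine ⟨c, lt_of_le_of_lt (by linarith [le_max_right (x - r / 2) (x - ε)]) hc.1, hc.2, ?_⟩
      rw [hceq, h0]
      apply div_nonpos_of_nonpos_of_nonneg
      · linarith [hpos a' ha'U ha'x]
      · linarith [ha'x]
    have claimR : ∀ ε > (0:ℝ), ∃ c, x < c ∧ c < x + ε ∧ deriv h c ≤ 0 := by
      intro ε hε
      set b' : ℝ := min (x + r / 2) (x + ε) with hb'def
      have hb'x : x < b' := lt_min (by linarith) (by linarith)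
      have hb'U : b' ∈ U := ⟨by linarith, lt_of_le_of_lt (min_le_left _ _) (by linarith)⟩
      have hIU : Icc x b' ⊆ U := by
        intro y hy
        constructor
        · linarith [hy.1]
        · calc y ≤ b' := hy.2
            _ < x + r := lt_of_le_of_lt (min_le_left _ _) (by linarith)
      obtain ⟨c, hc, hceq⟩ := exists_hasDerivAt_eq_slope h (deriv h) hb'x
        ((hVh.continuousOn).mono fun y hy => hUV (hIU hy))
        (fun y hy => hder y (hUV (hIU ⟨le_of_lt hy.1, le_of_lt hy.2⟩)))
      refine ⟨c, hc.1, lt_of_lt_of_le hc.2 (by linarith [min_le_right (x + r / 2) (x + ε)]), ?_⟩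
      rw [hceq, h0]
      apply div_nonpos_of_nonpos_of_nonneg
      · linarith [hneg b' hb'U hb'x]
      · linarith [hb'x]
    by_contra hdd
    rcases lt_or_gt_of_ne hdd with hddlt | hddgt
    · -- second derivative negative: deriv h > 0 just left of x, contradicting claimL
      have hT : Tendsto (slope (deriv h) x) (𝓝[<] x) (𝓝 (deriv (deriv h) x)) :=
        (hasDerivAt_iff_tendsto_slope.1 (hderd x hxV)).mono_left
          (nhdsWithin_mono x fun t ht => ne_of_lt ht)
      have hev : ∀ᶠ t in 𝓝[<] x, slope (deriv h) x t < 0 := hT.eventually_lt_const hddlt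
      obtain ⟨a'', ha''x, ha''⟩ := mem_nhdsLT_iff_exists_Ioo_subset.1 hev
      obtain ⟨c, hc1, hc2, hc3⟩ := claimL (x - a'') (by simpa using ha''x)
      have hcmem : c ∈ Ioo a'' x := ⟨by linarith, hc2⟩
      have := ha'' hcmem
      rw [mem_setOf_eq, slope_def_field, dh0, sub_zero] at this
      have : 0 ≤ deriv h c / (c - x) := div_nonneg_of_nonpos hc3 (by linarith)
      linarith [ha'' hcmem]
    · have hT : Tendsto (slope (deriv h) x) (𝓝[>] x) (𝓝 (deriv (deriv h) x)) :=
        (hasDerivAt_iff_tendsto_slope.1 (hderd x hxV)).mono_left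
          (nhdsWithin_mono x fun t ht => ne_of_gt ht)
      have hev : ∀ᶠ t in 𝓝[>] x, 0 < slope (deriv h) x t := hT.eventually_const_lt hddgt
      obtain ⟨b'', hb''x, hb''⟩ := mem_nhdsGT_iff_exists_Ioo_subset.1 hev
      obtain ⟨c, hc1, hc2, hc3⟩ := claimR (b'' - x) (by simpa using hb''x)
      have hcmem : c ∈ Ioo x b'' := ⟨hc1, by linarith⟩
      have h1 := hb'' hcmem
      rw [mem_setOf_eq, slope_def_field, dh0, sub_zero] at h1
      have h2 : deriv h c / (c - x) ≤ 0 := by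
        apply div_nonpos_of_nonpos_of_nonneg hc3
        linarith
      linarith
  -- the piecewise corrections
  set φ : ℝ → ℝ := fun t => if t ≤ x then h t else 0 with hφdef
  set φ₁ : ℝ → ℝ := fun t => if t ≤ x then deriv h t else 0 with hφ₁def
  set φ₂ : ℝ → ℝ := fun t => if t ≤ x then deriv (deriv h) t else 0 with hφ₂def
  have P1 : ∀ t ∈ U, HasDerivAt φ (φ₁ t) t := by
    intro t ht
    rcases lt_trichotomy t x with hlt | heqx | hgt
    · have hd : HasDerivAt h (deriv h t) t := hder t (hUV ht)
      have hev : φ =ᶠ[𝓝 t] h := by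
        filter_upwards [Iio_mem_nhds hlt] with s hs
        simp [hφdef, le_of_lt (mem_Iio.1 hs)]
      have : HasDerivAt φ (deriv h t) t := hd.congr_of_eventuallyEq hev
      simpa [hφ₁def, le_of_lt hlt] using this
    · subst heqx
      have hd : HasDerivAt h 0 t := by
        have := hder t hxV
        rwa [dh0] at this
      have : HasDerivAt (fun s => if s ≤ t then h s else 0) 0 t := aux_hasDerivAt_ite h0 hd
      simpa [hφdef, hφ₁def, dh0] using this
    · have hev : φ =ᶠ[𝓝 t] fun _ => (0:ℝ) := by
        filter_upwards [Ioi_mem_nhds hgt] with s hs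
        simp [hφdef, not_le.2 (mem_Ioi.1 hs)]
      have : HasDerivAt φ 0 t := (hasDerivAt_const t (0:ℝ)).congr_of_eventuallyEq hev
      simpa [hφ₁def, not_le.2 hgt] using this
  have P2 : ∀ t ∈ U, HasDerivAt φ₁ (φ₂ t) t := by
    intro t ht
    rcases lt_trichotomy t x with hlt | heqx | hgt
    · have hd : HasDerivAt (deriv h) (deriv (deriv h) t) t := hderd t (hUV ht)
      have hev : φ₁ =ᶠ[𝓝 t] deriv h := by
        filter_upwards [Iio_mem_nhds hlt] with s hs
        simp [hφ₁def, le_of_lt (mem_Iio.1 hs)]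
      have : HasDerivAt φ₁ (deriv (deriv h) t) t := hd.congr_of_eventuallyEq hev
      simpa [hφ₂def, le_of_lt hlt] using this
    · subst heqx
      have hd : HasDerivAt (deriv h) 0 t := by
        have := hderd t hxV
        rwa [ddh0] at this
      have : HasDerivAt (fun s => if s ≤ t then deriv h s else 0) 0 t :=
        aux_hasDerivAt_ite dh0 hd
      simpa [hφ₁def, hφ₂def, ddh0] using this
    · have hev : φ₁ =ᶠ[𝓝 t] fun _ => (0:ℝ) := by
        filter_upwards [Ioi_mem_nhds hgt] with s hs
        simp [hφ₁def, not_le.2 (mem_Ioi.1 hs)]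
      have : HasDerivAt φ₁ 0 t := (hasDerivAt_const t (0:ℝ)).congr_of_eventuallyEq hev
      simpa [hφ₂def, not_le.2 hgt] using this
  -- fmax agrees with the glued function on U
  have heqU : Set.EqOn fmax (fun t => f j₂ t + φ t) U := by
    intro t ht
    rcases lt_trichotomy t x with hlt | heqx | hgt
    · simp only [hφdef, if_pos (le_of_lt hlt), hhdef]
      rw [hleft' t ht hlt]; ring
    · subst heqx
      simp only [hφdef, if_pos (le_refl t), h0, add_zero]
      exact hfm2
    · simp only [hφdef, if_neg (not_le.2 hgt), add_zero]
      exact hright' t ht hgt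
  have hQ1 : ∀ t ∈ U, HasDerivAt fmax (deriv (f j₂) t + φ₁ t) t := fun t ht =>
    ((hder2 t (hUV ht)).add (P1 t ht)).congr_of_eventuallyEq
      (eventuallyEq_of_mem (hUo.mem_nhds ht) heqU)
  have hD1 : Set.EqOn (deriv fmax) (fun t => deriv (f j₂) t + φ₁ t) U :=
    fun t ht => (hQ1 t ht).deriv
  have hQ2 : ∀ t ∈ U, HasDerivAt (deriv fmax) (deriv (deriv (f j₂)) t + φ₂ t) t := fun t ht =>
    ((hderd2 t (hUV ht)).add (P2 t ht)).congr_of_eventuallyEq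
      (eventuallyEq_of_mem (hUo.mem_nhds ht) hD1)
  have hD2 : Set.EqOn (deriv (deriv fmax)) (fun t => deriv (deriv (f j₂)) t + φ₂ t) U :=
    fun t ht => (hQ2 t ht).deriv
  -- Lipschitz bound for the second derivative
  have hlipφ₂ : LipschitzOnWith K₁ φ₂ U :=
    aux_lipschitz_ite hxU ddh0 (hlip₁.mono hUt₁)
  have hlipG₂ : LipschitzOnWith (K₂ + K₁) (fun t => deriv (deriv (f j₂)) t + φ₂ t) U :=
    aux_lipschitz_add (hlip₂.mono hUt₂) hlipφ₂
  refine ⟨r, hr0, ?_, K₂ + K₁, aux_lipschitz_congr hD2 hlipG₂⟩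
  -- C² smoothness
  have h2eq : (2 : WithTop ℕ∞) = 1 + 1 := by norm_num
  rw [h2eq, contDiffOn_succ_iff_deriv_of_isOpen hUo]
  refine ⟨fun t ht => (hQ1 t ht).differentiableAt.differentiableWithinAt, by simp, ?_⟩
  have h1eq : (1 : WithTop ℕ∞) = 0 + 1 := by norm_num
  rw [h1eq, contDiffOn_succ_iff_deriv_of_isOpen hUo]
  refine ⟨fun t ht => (hQ2 t ht).differentiableAt.differentiableWithinAt, by simp, ?_⟩
  rw [contDiffOn_zero]
  refine ContinuousOn.congr ?_ hD2
  exact ((hddf1.continuousOn.mono hUV).add hlipφ₂.continuousOn)
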